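/- Let k ∈ (0,1] and fix T, B₁, B₂, C₁, C₂, D₁, D₂ as in the context. There exists a constant P > 0, depending only on k, T, B₁, B₂, C₁, C₂, D₁, D₂, such that the following holds: for every M > 0, every real sequence (f_n)_{n≥1} with Σ_{n≥1} (1+n²)^{2k} f_n² ≤ M², g_n = Φ(n,φ) f_n, every square-summable (g_n^ε)_{n≥1} with ‖g − g^ε‖ ≤ ε, every τ > 1 with 0 < τε < ‖g^ε‖, and μ > 0 the (unique) solution of ρ(μ) = τε, one has ε/μ^{k+1} ≤ (P/(τ−1)) · H((1−k)/2) · M, where H(y) = y^y (1−y)^{1−y} for y ∈ (0,1) and H(0) = H(1) = 1. -/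

import Mathlib

open MeasureTheory

section Aux


section Aux

lemma aux_minkowski (u v : ℕ → ℝ) (hu : Summable (fun n => (u n)^2))
    (hv : Summable (fun n => (v n)^2)) :
    Real.sqrt (∑' n, (u n + v n)^2) ≤
      Real.sqrt (∑' n, (u n)^2) + Real.sqrt (∑' n, (v n)^2) := by
  set Su := ∑' n, (u n)^2 with hSu
  set Sv := ∑' n, (v n)^2 with hSv
  have hSu0 : 0 ≤ Su := tsum_nonneg fun n => sq_nonneg _
  have hSv0 : 0 ≤ Sv := tsum_nonneg fun n => sq_nonneg _
  have huv : Summable (fun n => (u n + v n)^2) := by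
    apply Summable.of_nonneg_of_le (fun n => sq_nonneg _) (fun n => ?_)
      ((hu.add hv).mul_left 2)
    nlinarith [sq_nonneg (u n - v n)]
  have h1 : ∑' n, (u n + v n)^2 ≤ (Real.sqrt Su + Real.sqrt Sv)^2 := by
    apply Summable.tsum_le_of_sum_le huv
    intro F
    have cs := Real.sum_mul_le_sqrt_mul_sqrt F u v
    have e : ∑ n ∈ F, (u n + v n)^2
        = ∑ n ∈ F, (u n)^2 + 2 * ∑ n ∈ F, (u n * v n) + ∑ n ∈ F, (v n)^2 := by
      rw [Finset.mul_sum, ← Finset.sum_add_distrib, ← Finset.sum_add_distrib]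
      exact Finset.sum_congr rfl fun n _ => by ring
    have hFu : ∑ n ∈ F, (u n)^2 ≤ Su := Summable.sum_le_tsum F (fun n _ => sq_nonneg _) hu
    have hFv : ∑ n ∈ F, (v n)^2 ≤ Sv := Summable.sum_le_tsum F (fun n _ => sq_nonneg _) hv
    have hru : Real.sqrt (∑ n ∈ F, (u n)^2) ≤ Real.sqrt Su := Real.sqrt_le_sqrt hFu
    have hrv : Real.sqrt (∑ n ∈ F, (v n)^2) ≤ Real.sqrt Sv := Real.sqrt_le_sqrt hFv
    have hFu0 : 0 ≤ ∑ n ∈ F, (u n)^2 := Finset.sum_nonneg fun n _ => sq_nonneg _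
    have hFv0 : 0 ≤ ∑ n ∈ F, (v n)^2 := Finset.sum_nonneg fun n _ => sq_nonneg _
    have := Real.sqrt_nonneg (∑ n ∈ F, (u n)^2)
    have := Real.sqrt_nonneg (∑ n ∈ F, (v n)^2)
    have := Real.sqrt_nonneg Su
    have := Real.sqrt_nonneg Sv
    have hsqu := Real.sq_sqrt hSu0
    have hsqv := Real.sq_sqrt hSv0
    nlinarith [mul_le_mul hru hrv (Real.sqrt_nonneg _) (Real.sqrt_nonneg _)]
  calc Real.sqrt (∑' n, (u n + v n)^2) ≤ Real.sqrt ((Real.sqrt Su + Real.sqrt Sv)^2) :=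
        Real.sqrt_le_sqrt h1
    _ = Real.sqrt Su + Real.sqrt Sv := Real.sqrt_sq (by positivity)

lemma aux_tpow {k t Hv : ℝ} (hk0 : 0 < k) (hk1 : k ≤ 1) (ht : 0 < t)
    (hHv : Hv = if (1-k)/2 = 0 ∨ (1-k)/2 = 1 then 1
      else ((1-k)/2) ^ ((1-k)/2) * (1 - (1-k)/2) ^ (1 - (1-k)/2)) :
    t ^ ((1+k)/2) ≤ Hv * (1 + t) := by
  rcases eq_or_lt_of_le hk1 with hk | hk
  · -- k = 1
    subst hk
    rw [hHv]
    norm_num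
  · -- k < 1
    set y : ℝ := (1-k)/2 with hy
    have hy0 : 0 < y := by simp only [hy]; linarith
    have hy1 : y < 1 := by simp only [hy]; linarith
    have ha : 1 - y = (1+k)/2 := by simp only [hy]; ring
    have hHv' : Hv = y ^ y * (1-y) ^ (1-y) := by
      rw [hHv, if_neg]; push_neg; constructor <;> [exact ne_of_gt hy0; exact ne_of_lt hy1]
    set a : ℝ := 1 - y with hadef
    have ha0 : 0 < a := by simp only [hadef]; linarith
    have gm := Real.geom_mean_le_arith_mean2_weighted (le_of_lt ha0) (le_of_lt hy0)
      (by positivity : (0:ℝ) ≤ t / a) (by positivity : (0:ℝ) ≤ 1 / y)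
      (by simp only [hadef]; ring)
    -- gm : (t/a)^a * (1/y)^y ≤ a*(t/a) + y*(1/y)
    have hrhs : a * (t/a) + y * (1/y) = t + 1 := by
      field_simp
    rw [hrhs] at gm
    have key : t ^ ((1+k)/2) = (a ^ a * y ^ y) * ((t/a) ^ a * (1/y) ^ y) := by
      rw [← ha]
      rw [show (a:ℝ) ^ a * y ^ y * ((t/a) ^ a * (1/y) ^ y)
          = (a ^ a * (t/a) ^ a) * (y ^ y * (1/y) ^ y) by ring]
      rw [← Real.mul_rpow (le_of_lt ha0) (by positivity),
          ← Real.mul_rpow (le_of_lt hy0) (by positivity)]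
      rw [mul_div_cancel₀ _ (ne_of_gt ha0)]
      rw [mul_one_div, div_self (ne_of_gt hy0), Real.one_rpow, mul_one]
    rw [key, hHv']
    have hprod : 0 ≤ a ^ a * y ^ y := by positivity
    calc (a ^ a * y ^ y) * ((t/a) ^ a * (1/y) ^ y) ≤ (a ^ a * y ^ y) * (t + 1) :=
          mul_le_mul_of_nonneg_left gm hprod
      _ = y ^ y * (1-y) ^ (1-y) * (1 + t) := by rw [← hadef]; ring

lemma aux_perterm {k μ x Hv : ℝ} (hk0 : 0 < k) (hk1 : k ≤ 1) (hμ : 0 < μ) (hx : 0 < x)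
    (hHv : Hv = if (1-k)/2 = 0 ∨ (1-k)/2 = 1 then 1
      else ((1-k)/2) ^ ((1-k)/2) * (1 - (1-k)/2) ^ (1 - (1-k)/2)) :
    μ^2 * x ^ (k+1) ≤ Hv * μ ^ (k+1) * (μ^2 + x^2) := by
  have ht : 0 < x^2/μ^2 := by positivity
  have h := aux_tpow hk0 hk1 ht hHv
  have e1 : (x^2/μ^2) ^ ((1+k)/2) = x ^ (k+1) / μ ^ (k+1) := by
    rw [Real.div_rpow (sq_nonneg x) (sq_nonneg μ)]
    congr 1
    · rw [← Real.rpow_natCast x 2, ← Real.rpow_mul (le_of_lt hx)]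
      congr 1; push_cast; ring
    · rw [← Real.rpow_natCast μ 2, ← Real.rpow_mul (le_of_lt hμ)]
      congr 1; push_cast; ring
  have e2 : 1 + x^2/μ^2 = (μ^2 + x^2)/μ^2 := by field_simp
  rw [e1, e2, ← mul_div_assoc] at h
  have hμp : 0 < μ ^ (k+1) := Real.rpow_pos_of_pos hμ _
  have hμ2 : 0 < μ^2 := by positivity
  rw [div_le_div_iff₀ hμp (by positivity : (0:ℝ) < μ^2)] at h
  nlinarith [h]

lemma aux_phi_bounds (T D₁ D₂ L U : ℝ) (hT : 0 < T) (hD₁ : 0 < D₁) (hD₁₂ : D₁ ≤ D₂)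
    (hL : 0 < L)
    (a h : ℝ → ℝ) (ha : ContinuousOn a (Set.Icc 0 T)) (hhc : ContinuousOn h (Set.Icc 0 T))
    (haB : ∀ t ∈ Set.Icc 0 T, D₁ ≤ a t ∧ a t ≤ D₂)
    (hhB : ∀ t ∈ Set.Icc 0 T, L ≤ h t ∧ h t ≤ U)
    (A Bf : ℝ → ℝ) (hA : ∀ t, A t = ∫ s in (0:ℝ)..t, a s) (hBf : ∀ t, Bf t = A t - A T)
    (c : ℝ) (hc1 : 1 ≤ c) :
    L * (1 - Real.exp (-(D₁*T))) / (c * D₂) ≤ ∫ t in (0:ℝ)..T, Real.exp (c * Bf t) * h t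
    ∧ (∫ t in (0:ℝ)..T, Real.exp (c * Bf t) * h t) ≤ U / (c * D₁) := by
  have hD₂ : 0 < D₂ := lt_of_lt_of_le hD₁ hD₁₂
  have hc0 : 0 < c := lt_of_lt_of_le one_pos hc1
  have hU : 0 < U := by
    have := hhB 0 (by constructor <;> [rfl; exact hT.le])
    linarith [this.1, this.2]
  have hTIcc : Set.uIcc (0:ℝ) T = Set.Icc 0 T := Set.uIcc_of_le hT.le
  have haInt : IntervalIntegrable a volume 0 T :=
    ContinuousOn.intervalIntegrable (by rwa [hTIcc])
  have hA0 : A 0 = 0 := by rw [hA]; simp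
  have hATlb : D₁ * T ≤ A T := by
    rw [hA]
    have := intervalIntegral.integral_mono_on hT.le intervalIntegrable_const haInt
      (fun t ht => (haB t ht).1)
    simpa [mul_comm] using this
  have hAcont : ContinuousOn A (Set.Icc 0 T) := by
    have h1 : IntegrableOn a (Set.uIcc 0 T) := by
      rw [hTIcc]; exact ha.integrableOn_Icc
    have h2 := intervalIntegral.continuousOn_primitive_interval h1
    rw [hTIcc] at h2
    exact (funext hA : A = _) ▸ h2
  set F : ℝ → ℝ := fun t => Real.exp (c * Bf t) with hF
  have hBfc : ContinuousOn Bf (Set.Icc 0 T) := by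
    have : ContinuousOn (fun t => A t - A T) (Set.Icc 0 T) := hAcont.sub continuousOn_const
    exact (funext hBf : Bf = _) ▸ this
  have hFcont : ContinuousOn F (Set.Icc 0 T) :=
    Real.continuous_exp.comp_continuousOn (continuousOn_const.mul hBfc)
  have hF0 : ∀ t, 0 < F t := fun t => Real.exp_pos _
  have hderiv : ∀ t ∈ Set.Ioo (0:ℝ) T, HasDerivAt F (c * a t * F t) t := by
    intro t ht
    have htmem : Set.Icc (0:ℝ) T ∈ nhds t := Icc_mem_nhds ht.1 ht.2
    have haC : ContinuousAt a t := ha.continuousAt htmem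
    have hm : StronglyMeasurableAtFilter a (nhds t) :=
      ContinuousOn.stronglyMeasurableAtFilter isOpen_Ioo (ha.mono Set.Ioo_subset_Icc_self) t ht
    have haInt' : IntervalIntegrable a volume 0 t := by
      apply haInt.mono_set
      rw [hTIcc, Set.uIcc_of_le ht.1.le]
      exact Set.Icc_subset_Icc le_rfl ht.2.le
    have hAd : HasDerivAt A (a t) t := by
      have := intervalIntegral.integral_hasDerivAt_right haInt' hm haC
      exact (funext hA : A = _) ▸ this
    have hBd : HasDerivAt Bf (a t) t := by
      have : HasDerivAt (fun s => A s - A T) (a t) t := hAd.sub_const _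
      exact (funext hBf : Bf = _) ▸ this
    have h1 : HasDerivAt (fun s => c * Bf s) (c * a t) t := hBd.const_mul c
    have h2 := h1.exp
    simpa [hF, mul_comm, mul_assoc, mul_left_comm] using h2
  have hf'cont : ContinuousOn (fun t => c * a t * F t) (Set.Icc 0 T) :=
    (continuousOn_const.mul ha).mul hFcont
  have hf'int : IntervalIntegrable (fun t => c * a t * F t) volume 0 T :=
    ContinuousOn.intervalIntegrable (by rwa [hTIcc])
  have hFTC : ∫ t in (0:ℝ)..T, c * a t * F t = 1 - Real.exp (-(c * A T)) := by
    rw [intervalIntegral.integral_eq_sub_of_hasDeriv_right_of_le hT.le hFcont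
      (fun t ht => (hderiv t ht).hasDerivWithinAt) hf'int]
    simp only [hF, hBf, hA0]
    rw [show c * (A T - A T) = 0 by ring, show c * (0 - A T) = -(c * A T) by ring]
    simp
  have hFint : IntervalIntegrable F volume 0 T :=
    ContinuousOn.intervalIntegrable (by rwa [hTIcc])
  set I : ℝ := ∫ t in (0:ℝ)..T, F t with hI
  have hexp0 : 0 < Real.exp (-(c * A T)) := Real.exp_pos _
  have hexple : Real.exp (-(c * A T)) ≤ Real.exp (-(D₁ * T)) := by
    apply Real.exp_le_exp.2
    have hAT0 : 0 ≤ A T := le_trans (by positivity) hATlb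
    nlinarith
  have hIub : I ≤ 1 / (c * D₁) := by
    have h1 : ∫ t in (0:ℝ)..T, (c * D₁) * F t ≤ ∫ t in (0:ℝ)..T, c * a t * F t := by
      apply intervalIntegral.integral_mono_on hT.le
        (hFint.const_mul _) hf'int
      intro t ht
      have h1 := (haB t ht).1
      have h2 := (hF0 t).le
      nlinarith [mul_nonneg (mul_nonneg hc0.le (sub_nonneg.2 h1)) h2]
    rw [intervalIntegral.integral_const_mul, hFTC] at h1
    rw [le_div_iff₀ (by positivity)]
    nlinarith
  have hIlb : (1 - Real.exp (-(D₁*T))) / (c * D₂) ≤ I := by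
    have h1 : ∫ t in (0:ℝ)..T, c * a t * F t ≤ ∫ t in (0:ℝ)..T, (c * D₂) * F t := by
      apply intervalIntegral.integral_mono_on hT.le hf'int (hFint.const_mul _)
      intro t ht
      have h1 := (haB t ht).2
      have h2 := (hF0 t).le
      nlinarith [mul_nonneg (mul_nonneg hc0.le (sub_nonneg.2 h1)) h2]
    rw [intervalIntegral.integral_const_mul, hFTC] at h1
    rw [div_le_iff₀ (by positivity)]
    nlinarith
  have hFh : IntervalIntegrable (fun t => F t * h t) volume 0 T :=
    ContinuousOn.intervalIntegrable (by rw [hTIcc]; exact hFcont.mul hhc)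
  constructor
  · have h1 : ∫ t in (0:ℝ)..T, L * F t ≤ ∫ t in (0:ℝ)..T, F t * h t := by
      apply intervalIntegral.integral_mono_on hT.le (hFint.const_mul _) hFh
      intro t ht
      have h1 := (hhB t ht).1
      have h2 := (hF0 t).le
      nlinarith [mul_nonneg (sub_nonneg.2 h1) h2]
    rw [intervalIntegral.integral_const_mul] at h1
    have : L * ((1 - Real.exp (-(D₁*T))) / (c * D₂)) ≤ L * I :=
      mul_le_mul_of_nonneg_left hIlb hL.le
    calc L * (1 - Real.exp (-(D₁*T))) / (c * D₂)
        = L * ((1 - Real.exp (-(D₁*T))) / (c * D₂)) := by ring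
      _ ≤ L * I := this
      _ ≤ ∫ t in (0:ℝ)..T, F t * h t := h1
  · have h1 : ∫ t in (0:ℝ)..T, F t * h t ≤ ∫ t in (0:ℝ)..T, U * F t := by
      apply intervalIntegral.integral_mono_on hT.le hFh (hFint.const_mul _)
      intro t ht
      have h1 := (hhB t ht).2
      have h2 := (hF0 t).le
      nlinarith [mul_nonneg (sub_nonneg.2 h1) h2]
    rw [intervalIntegral.integral_const_mul] at h1
    calc (∫ t in (0:ℝ)..T, F t * h t) ≤ U * I := h1
      _ ≤ U * (1 / (c * D₁)) := mul_le_mul_of_nonneg_left hIub hU.le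
      _ = U / (c * D₁) := by ring

lemma aux_eps_pos {τ ε : ℝ} (h1 : 1 < τ) (h2 : 0 < τ * ε) : 0 < ε := by nlinarith

lemma aux_one_le_sq {x : ℝ} (h : 0 ≤ x) : 1 ≤ (x + 1)^2 := by nlinarith

lemma aux_r_facts {m p : ℝ} (hm : 0 < m) :
    0 < m^2 / (m^2 + p^2) ∧ m^2 / (m^2 + p^2) ≤ 1 := by
  have h1 : 0 < m^2 := by positivity
  have h2 : 0 < m^2 + p^2 := by nlinarith [sq_nonneg p]
  exact ⟨div_pos h1 h2, by rw [div_le_one h2]; nlinarith [sq_nonneg p]⟩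

lemma aux_inv_le {c x N : ℝ} (hN : 0 < N) (hc : 0 < c) (h : c / N ≤ x) :
    N⁻¹ ≤ x / c := by
  rw [inv_eq_one_div, div_le_div_iff₀ hN hc]
  have := (div_le_iff₀ hN).1 h
  nlinarith

lemma aux_sq_prod_le {Φv C fv w : ℝ} (h0 : 0 ≤ Φv) (h1 : Φv ≤ C) (h2 : fv^2 ≤ w) :
    (Φv * fv)^2 ≤ C^2 * w := by
  have hC : 0 ≤ C := le_trans h0 h1
  have h3 : Φv^2 ≤ C^2 := by nlinarith
  have h4 : 0 ≤ fv^2 := sq_nonneg fv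
  calc (Φv * fv)^2 = Φv^2 * fv^2 := by ring
    _ ≤ C^2 * fv^2 := mul_le_mul_of_nonneg_right h3 h4
    _ ≤ C^2 * w := mul_le_mul_of_nonneg_left h2 (by positivity)

lemma aux_sq_sub_le (x y : ℝ) : (x - y)^2 ≤ 2 * (x^2 + y^2) := by
  nlinarith [sq_nonneg (x + y)]

lemma aux_sq_mul_le {rv u : ℝ} (h0 : 0 ≤ rv) (h1 : rv ≤ 1) : (rv * u)^2 ≤ u^2 := by
  have h2 : rv^2 ≤ 1 := by nlinarith
  calc (rv * u)^2 = rv^2 * u^2 := by ring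
    _ ≤ 1 * u^2 := mul_le_mul_of_nonneg_right h2 (sq_nonneg u)
    _ = u^2 := by ring

lemma aux_tau_eps {τ ε q : ℝ} (h : τ * ε ≤ ε + q) : (τ - 1) * ε ≤ q := by
  have e : (τ - 1) * ε = τ * ε - ε := by ring
  linarith

end Aux

set_option maxHeartbeats 1000000 in
/-- Lemma 6: for `k ∈ (0,1]`, there is a constant `P > 0` depending only on
`k, T, B₁, B₂, C₁, C₂, D₁, D₂` such that whenever the a priori bound with constant `M > 0`,
the noise assumptions, `τ > 1`, `0 < τε < ‖g^ε‖` hold and `μ > 0` solves `ρ(μ) = τε`, one has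
`ε/μ^{k+1} ≤ (P/(τ−1)) · H((1−k)/2) · M`. -/
theorem stmt_16
    (T D₁ D₂ B₁ B₂ C₁ C₂ : ℝ) (hT : 0 < T) (hD₁ : 0 < D₁) (hD₁₂ : D₁ ≤ D₂)
    (hB₁ : 0 < B₁) (hB₁₂ : B₁ ≤ B₂) (hC₁ : 0 < C₁) (hC₁₂ : C₁ ≤ C₂)
    (a φ φε : ℝ → ℝ) (ha : ContinuousOn a (Set.Icc 0 T))
    (hφc : ContinuousOn φ (Set.Icc 0 T)) (hφεc : ContinuousOn φε (Set.Icc 0 T))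
    (haB : ∀ t ∈ Set.Icc 0 T, D₁ ≤ a t ∧ a t ≤ D₂)
    (hφB : ∀ t ∈ Set.Icc 0 T, B₁ ≤ φ t ∧ φ t ≤ B₂)
    (hφεB : ∀ t ∈ Set.Icc 0 T, C₁ ≤ φε t ∧ φε t ≤ C₂)
    (A Bf : ℝ → ℝ) (hA : ∀ t, A t = ∫ s in (0:ℝ)..t, a s)
    (hBf : ∀ t, Bf t = A t - A T)
    (Φ : ℕ → (ℝ → ℝ) → ℝ)
    (hΦ : ∀ (n : ℕ) (h : ℝ → ℝ), Φ n h = ∫ t in (0:ℝ)..T, Real.exp ((n:ℝ)^2 * Bf t) * h t)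
    (H : ℝ → ℝ)
    (hH : ∀ y : ℝ, H y = if y = 0 ∨ y = 1 then 1 else y ^ y * (1 - y) ^ (1 - y))
    (k : ℝ) (hk0 : 0 < k) (hk1 : k ≤ 1) :
    ∃ P : ℝ, 0 < P ∧
      ∀ (M : ℝ), 0 < M →
      ∀ (f g gε : ℕ → ℝ) (ε τ μ : ℝ),
        Summable (fun n : ℕ => ((1:ℝ) + ((n:ℝ)+1)^2) ^ (2*k) * (f (n+1))^2) →
        (∑' n : ℕ, ((1:ℝ) + ((n:ℝ)+1)^2) ^ (2*k) * (f (n+1))^2) ≤ M^2 →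
        (∀ n : ℕ, g (n+1) = Φ (n+1) φ * f (n+1)) →
        Summable (fun n : ℕ => (gε (n+1))^2) →
        Real.sqrt (∑' n : ℕ, (g (n+1) - gε (n+1))^2) ≤ ε →
        1 < τ → 0 < τ * ε →
        τ * ε < Real.sqrt (∑' n : ℕ, (gε (n+1))^2) →
        0 < μ →
        Real.sqrt (∑' n : ℕ, (μ^2 / (μ^2 + (Φ (n+1) φε)^2))^2 * (gε (n+1))^2) = τ * ε →
        ε / μ ^ (k+1) ≤ P / (τ - 1) * H ((1-k)/2) * M := by
  have hD₂ : 0 < D₂ := lt_of_lt_of_le hD₁ hD₁₂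
  have hE : 0 < 1 - Real.exp (-(D₁*T)) := by
    have : Real.exp (-(D₁*T)) < 1 := by
      rw [Real.exp_lt_one_iff]
      exact neg_lt_zero.mpr (mul_pos hD₁ hT)
    linarith
  set c₁ : ℝ := C₁ * (1 - Real.exp (-(D₁*T))) / D₂ with hc₁def
  set c₂ : ℝ := B₂ / D₁ with hc₂def
  have hB₂ : 0 < B₂ := lt_of_lt_of_le hB₁ hB₁₂
  have hc₁0 : 0 < c₁ := div_pos (mul_pos hC₁ hE) hD₂
  have hc₂0 : 0 < c₂ := div_pos hB₂ hD₁
  refine ⟨c₂ / c₁ ^ (k+1), div_pos hc₂0 (Real.rpow_pos_of_pos hc₁0 _), ?_⟩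
  intro M hM f g gε ε τ μ hfs hfM hgdef hgεs hnoise hτ hτε hτεlt hμ hρ
  set P : ℝ := c₂ / c₁ ^ (k+1) with hPdef
  have hP0 : 0 < P := div_pos hc₂0 (Real.rpow_pos_of_pos hc₁0 _)
  set Hv : ℝ := H ((1-k)/2) with hHvdef
  have hHvform : Hv = if (1-k)/2 = 0 ∨ (1-k)/2 = 1 then 1
      else ((1-k)/2) ^ ((1-k)/2) * (1 - (1-k)/2) ^ (1 - (1-k)/2) := hH _
  have hHv0 : 0 < Hv := by
    rw [hHvform]; split_ifs with h
    · norm_num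
    · push_neg at h
      have h1 : (0:ℝ) ≤ (1-k)/2 := by linarith
      have h2 : 0 < (1-k)/2 := lt_of_le_of_ne h1 (Ne.symm h.1)
      have h3 : 0 < 1 - (1-k)/2 := by linarith
      exact mul_pos (Real.rpow_pos_of_pos h2 _) (Real.rpow_pos_of_pos h3 _)
  have hτ0 : 0 < τ := lt_trans one_pos hτ
  have hε0 : 0 < ε := aux_eps_pos hτ hτε
  -- Bounds on Φ
  have key : ∀ n : ℕ, c₁ / ((n:ℝ)+1)^2 ≤ Φ (n+1) φε ∧ 0 ≤ Φ (n+1) φ ∧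
      Φ (n+1) φ ≤ c₂ / ((n:ℝ)+1)^2 := by
    intro n
    have hn0 : (0:ℝ) ≤ (n:ℝ) := Nat.cast_nonneg n
    have hc1 : (1:ℝ) ≤ ((n:ℝ)+1)^2 := aux_one_le_sq hn0
    have hN20 : (0:ℝ) < ((n:ℝ)+1)^2 := by positivity
    have hcast : ∀ hh : ℝ → ℝ, Φ (n+1) hh
        = ∫ t in (0:ℝ)..T, Real.exp (((n:ℝ)+1)^2 * Bf t) * hh t := by
      intro hh; rw [hΦ]
      apply intervalIntegral.integral_congr
      intro t _
      have hcc : ((↑(n+1):ℝ))^2 = ((n:ℝ)+1)^2 := by push_cast; ring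
      rw [hcc]
    have b1 := aux_phi_bounds T D₁ D₂ C₁ C₂ hT hD₁ hD₁₂ hC₁ a φε ha hφεc haB hφεB
      A Bf hA hBf _ hc1
    have b2 := aux_phi_bounds T D₁ D₂ B₁ B₂ hT hD₁ hD₁₂ hB₁ a φ ha hφc haB hφB
      A Bf hA hBf _ hc1
    refine ⟨?_, ?_, ?_⟩
    · rw [hcast]
      refine le_trans (le_of_eq ?_) b1.1
      rw [hc₁def, div_div, mul_comm D₂ (((n:ℝ)+1)^2)]
    · rw [hcast]
      exact le_trans (div_nonneg (mul_nonneg hB₁.le hE.le)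
        (mul_nonneg (sq_nonneg _) hD₂.le)) b2.1
    · rw [hcast]
      refine le_trans b2.2 (le_of_eq ?_)
      rw [hc₂def, div_div, mul_comm D₁ (((n:ℝ)+1)^2)]
  set r : ℕ → ℝ := fun n => μ^2 / (μ^2 + (Φ (n+1) φε)^2) with hrdef
  have hμp : 0 < μ ^ (k+1) := Real.rpow_pos_of_pos hμ _
  set Q : ℝ := P * Hv * μ ^ (k+1) with hQdef
  have hQ0 : 0 < Q := mul_pos (mul_pos hP0 hHv0) hμp
  have hμ2 : (0:ℝ) < μ^2 := pow_pos hμ 2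
  have hr01 : ∀ n, 0 < r n ∧ r n ≤ 1 := by
    intro n
    simp only [hrdef]
    exact aux_r_facts hμ
  -- per-term bound
  have hperterm : ∀ n : ℕ, r n * Φ (n+1) φ * ((1 + ((n:ℝ)+1)^2) ^ (-k)) ≤ Q := by
    intro n
    obtain ⟨hφεlb, hφnn, hφub⟩ := key n
    have hn0 : (0:ℝ) ≤ (n:ℝ) := Nat.cast_nonneg n
    set N2 : ℝ := ((n:ℝ)+1)^2 with hN2
    have hN2one : (1:ℝ) ≤ N2 := by rw [hN2]; exact aux_one_le_sq hn0
    have hN20 : (0:ℝ) < N2 := lt_of_lt_of_le one_pos hN2one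
    set x : ℝ := Φ (n+1) φε with hxdef
    have hx0 : 0 < x := lt_of_lt_of_le (div_pos hc₁0 hN20) hφεlb
    have step1 : Φ (n+1) φ ≤ (c₂/c₁) * x :=
      calc Φ (n+1) φ ≤ c₂ / N2 := hφub
        _ = (c₂/c₁) * (c₁/N2) := by field_simp
        _ ≤ (c₂/c₁) * x := mul_le_mul_of_nonneg_left hφεlb (div_nonneg hc₂0.le hc₁0.le)
    have step2 : (1 + N2) ^ (-k) ≤ (x/c₁) ^ k := by
      have e1 : (1+N2) ^ (-k) = ((1+N2) ^ k)⁻¹ := Real.rpow_neg (by linarith) k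
      have e2 : N2 ^ k ≤ (1+N2) ^ k := Real.rpow_le_rpow hN20.le (by linarith) hk0.le
      have e3 : 0 < N2 ^ k := Real.rpow_pos_of_pos hN20 k
      have e4 : ((1+N2)^k)⁻¹ ≤ (N2^k)⁻¹ := by
        apply inv_anti₀ e3 e2
      have e5 : (N2^k)⁻¹ = (N2⁻¹)^k := (Real.inv_rpow hN20.le k).symm
      have e6 : N2⁻¹ ≤ x / c₁ := aux_inv_le hN20 hc₁0 hφεlb
      have e7 : (N2⁻¹)^k ≤ (x/c₁)^k := Real.rpow_le_rpow (inv_nonneg.2 hN20.le) e6 hk0.le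
      rw [e1]
      calc ((1+N2)^k)⁻¹ ≤ (N2^k)⁻¹ := e4
        _ = (N2⁻¹)^k := e5
        _ ≤ (x/c₁)^k := e7
    have hrn := hr01 n
    have hexp_nn : (0:ℝ) ≤ (1+N2)^(-k) := Real.rpow_nonneg (by linarith) _
    have main1 : r n * Φ (n+1) φ * ((1+N2)^(-k)) ≤ r n * ((c₂/c₁)*x) * ((x/c₁)^k) := by
      apply mul_le_mul (mul_le_mul le_rfl step1 hφnn hrn.1.le) step2 hexp_nn
      exact mul_nonneg hrn.1.le (mul_nonneg (div_nonneg hc₂0.le hc₁0.le) hx0.le)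
    have hpt := aux_perterm hk0 hk1 hμ hx0 hHvform
    have hsum0 : 0 < μ^2 + x^2 := by
      have := sq_nonneg x
      linarith
    have hxk : x * x^k = x^(k+1) := by rw [Real.rpow_add hx0, Real.rpow_one]; ring
    have hck : c₁ * c₁^k = c₁^(k+1) := by rw [Real.rpow_add hc₁0, Real.rpow_one]; ring
    have main2 : r n * ((c₂/c₁)*x) * ((x/c₁)^k)
        = (c₂ / c₁^(k+1)) * (μ^2 * x^(k+1) / (μ^2+x^2)) := by
      simp only [hrdef, ← hxdef]
      rw [Real.div_rpow hx0.le hc₁0.le, ← hxk, ← hck]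
      have hxkpos : 0 < x ^ k := Real.rpow_pos_of_pos hx0 k
      have hckpos : 0 < c₁ ^ k := Real.rpow_pos_of_pos hc₁0 k
      field_simp
    have main3 : (c₂ / c₁^(k+1)) * (μ^2 * x^(k+1) / (μ^2+x^2)) ≤ Q := by
      have h2 : μ^2 * x^(k+1)/(μ^2+x^2) ≤ Hv * μ^(k+1) := by
        rw [div_le_iff₀ hsum0]; linarith [hpt]
      rw [hQdef, hPdef]
      calc (c₂ / c₁^(k+1)) * (μ^2 * x^(k+1) / (μ^2+x^2))
          ≤ (c₂ / c₁^(k+1)) * (Hv * μ^(k+1)) := by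
            exact mul_le_mul_of_nonneg_left h2
              (le_of_lt (div_pos hc₂0 (Real.rpow_pos_of_pos hc₁0 _)))
        _ = c₂ / c₁^(k+1) * Hv * μ^(k+1) := by ring
    calc r n * Φ (n+1) φ * ((1+N2)^(-k)) ≤ r n * ((c₂/c₁)*x) * ((x/c₁)^k) := main1
      _ = (c₂ / c₁^(k+1)) * (μ^2 * x^(k+1) / (μ^2+x^2)) := main2
      _ ≤ Q := main3
  -- summability and term bounds
  have hwnn : ∀ n : ℕ, (0:ℝ) ≤ ((1:ℝ) + ((n:ℝ)+1)^2) ^ (2*k) * (f (n+1))^2 := by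
    intro n
    have h1 : (0:ℝ) ≤ ((1:ℝ) + ((n:ℝ)+1)^2) ^ (2*k) := Real.rpow_nonneg (by positivity) _
    exact mul_nonneg h1 (sq_nonneg _)
  have hfw : ∀ n : ℕ, (f (n+1))^2 ≤ ((1:ℝ) + ((n:ℝ)+1)^2) ^ (2*k) * (f (n+1))^2 := by
    intro n
    have hb : (1:ℝ) ≤ ((1:ℝ) + ((n:ℝ)+1)^2) ^ (2*k) := by
      have := Real.rpow_le_rpow_of_exponent_le
        (le_add_of_nonneg_right (sq_nonneg ((n:ℝ)+1)) : (1:ℝ) ≤ 1 + ((n:ℝ)+1)^2)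
        (by linarith : (0:ℝ) ≤ 2*k)
      rwa [Real.rpow_zero] at this
    exact le_mul_of_one_le_left (sq_nonneg _) hb
  have termbound : ∀ n : ℕ, (r n * g (n+1))^2
      ≤ Q^2 * (((1:ℝ) + ((n:ℝ)+1)^2) ^ (2*k) * (f (n+1))^2) := by
    intro n
    have hX0 : (0:ℝ) < 1 + ((n:ℝ)+1)^2 := by positivity
    have hid : (((1:ℝ) + ((n:ℝ)+1)^2) ^ (-k))^2 * ((1:ℝ) + ((n:ℝ)+1)^2) ^ (2*k) = 1 := by
      rw [← Real.rpow_natCast (((1:ℝ) + ((n:ℝ)+1)^2) ^ (-k)) 2, ← Real.rpow_mul hX0.le,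
        ← Real.rpow_add hX0]
      rw [show -k * (2:ℕ) + 2*k = 0 by push_cast; ring, Real.rpow_zero]
    have hb := hperterm n
    have hφnn := (key n).2.1
    have hnn : 0 ≤ r n * Φ (n+1) φ * (((1:ℝ) + ((n:ℝ)+1)^2)^(-k)) := by
      apply mul_nonneg (mul_nonneg (hr01 n).1.le hφnn)
      exact Real.rpow_nonneg (by positivity) _
    have hsq : (r n * Φ (n+1) φ * (((1:ℝ) + ((n:ℝ)+1)^2)^(-k)))^2 ≤ Q^2 :=
      pow_le_pow_left₀ hnn hb 2
    calc (r n * g (n+1))^2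
        = (r n * Φ (n+1) φ * (((1:ℝ) + ((n:ℝ)+1)^2)^(-k)))^2
          * (((1:ℝ) + ((n:ℝ)+1)^2) ^ (2*k) * (f (n+1))^2) := by
          rw [hgdef n]
          calc (r n * (Φ (n+1) φ * f (n+1)))^2
              = (r n * Φ (n+1) φ)^2 * (f (n+1))^2
                * ((((1:ℝ) + ((n:ℝ)+1)^2)^(-k))^2 * ((1:ℝ) + ((n:ℝ)+1)^2) ^ (2*k)) := by
                rw [hid]; ring
            _ = _ := by ring
      _ ≤ Q^2 * (((1:ℝ) + ((n:ℝ)+1)^2) ^ (2*k) * (f (n+1))^2) :=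
          mul_le_mul_of_nonneg_right hsq (hwnn n)
  have hQw : Summable (fun n : ℕ => Q^2 * (((1:ℝ) + ((n:ℝ)+1)^2) ^ (2*k) * (f (n+1))^2)) :=
    hfs.mul_left _
  have hrg2 : Summable (fun n : ℕ => (r n * g (n+1))^2) :=
    Summable.of_nonneg_of_le (fun n => sq_nonneg _) termbound hQw
  have hg2 : Summable (fun n : ℕ => (g (n+1))^2) := by
    apply Summable.of_nonneg_of_le (fun n => sq_nonneg _) (fun n => ?_) (hfs.mul_left (c₂^2))
    obtain ⟨_, hφnn, hφub⟩ := key n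
    have hn0 : (0:ℝ) ≤ (n:ℝ) := Nat.cast_nonneg n
    have hN2one : (1:ℝ) ≤ ((n:ℝ)+1)^2 := aux_one_le_sq hn0
    have hφc₂ : Φ (n+1) φ ≤ c₂ := le_trans hφub (div_le_self hc₂0.le hN2one)
    rw [hgdef n]
    exact aux_sq_prod_le hφnn hφc₂ (hfw n)
  have hdiff2 : Summable (fun n : ℕ => (g (n+1) - gε (n+1))^2) := by
    apply Summable.of_nonneg_of_le (fun n => sq_nonneg _) (fun n => ?_)
      ((hg2.add hgεs).mul_left 2)
    exact aux_sq_sub_le _ _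
  have hu2 : Summable (fun n : ℕ => (r n * (gε (n+1) - g (n+1)))^2) := by
    apply Summable.of_nonneg_of_le (fun n => sq_nonneg _) (fun n => ?_) hdiff2
    obtain ⟨h1, h2⟩ := hr01 n
    calc (r n * (gε (n+1) - g (n+1)))^2 ≤ (gε (n+1) - g (n+1))^2 := aux_sq_mul_le h1.le h2
      _ = (g (n+1) - gε (n+1))^2 := by ring
  have hrgM : Real.sqrt (∑' n : ℕ, (r n * g (n+1))^2) ≤ Q * M := by
    have h1 : ∑' n : ℕ, (r n * g (n+1))^2 ≤ Q^2 * M^2 := by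
      calc ∑' n : ℕ, (r n * g (n+1))^2
          ≤ ∑' n : ℕ, Q^2 * (((1:ℝ) + ((n:ℝ)+1)^2) ^ (2*k) * (f (n+1))^2) :=
            Summable.tsum_le_tsum termbound hrg2 hQw
        _ = Q^2 * ∑' n : ℕ, (((1:ℝ) + ((n:ℝ)+1)^2) ^ (2*k) * (f (n+1))^2) := tsum_mul_left
        _ ≤ Q^2 * M^2 := mul_le_mul_of_nonneg_left hfM (sq_nonneg Q)
    calc Real.sqrt (∑' n : ℕ, (r n * g (n+1))^2) ≤ Real.sqrt (Q^2 * M^2) :=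
        Real.sqrt_le_sqrt h1
      _ = Q * M := by
        rw [show Q^2*M^2 = (Q*M)^2 by ring, Real.sqrt_sq (mul_nonneg hQ0.le hM.le)]
  have hue : Real.sqrt (∑' n : ℕ, (r n * (gε (n+1) - g (n+1)))^2) ≤ ε := by
    refine le_trans (Real.sqrt_le_sqrt (Summable.tsum_le_tsum (fun n => ?_) hu2 hdiff2)) hnoise
    obtain ⟨h1, h2⟩ := hr01 n
    calc (r n * (gε (n+1) - g (n+1)))^2 ≤ (gε (n+1) - g (n+1))^2 := aux_sq_mul_le h1.le h2
      _ = (g (n+1) - gε (n+1))^2 := by ring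
  have hρ' : Real.sqrt (∑' n : ℕ, (r n * gε (n+1))^2) = τ * ε := by
    rw [← hρ]
    congr 1
    apply tsum_congr
    intro n
    simp only [hrdef]
    ring
  have htri : Real.sqrt (∑' n : ℕ, (r n * gε (n+1))^2)
      ≤ Real.sqrt (∑' n : ℕ, (r n * (gε (n+1) - g (n+1)))^2)
        + Real.sqrt (∑' n : ℕ, (r n * g (n+1))^2) := by
    have hmk := aux_minkowski (fun n => r n * (gε (n+1) - g (n+1)))
      (fun n => r n * g (n+1)) hu2 hrg2
    have e : ∀ n : ℕ, (r n * gε (n+1))^2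
        = ((r n * (gε (n+1) - g (n+1))) + r n * g (n+1))^2 := fun n => by ring
    rw [tsum_congr e]
    exact hmk
  have hchain : τ * ε ≤ ε + Q * M := by
    rw [← hρ']
    exact le_trans htri (add_le_add hue hrgM)
  have hfinal : (τ - 1) * ε ≤ Q * M := aux_tau_eps hchain
  have hτ1 : 0 < τ - 1 := by linarith
  rw [div_le_iff₀ hμp, div_mul_eq_mul_div, div_mul_eq_mul_div, div_mul_eq_mul_div,
    le_div_iff₀ hτ1]
  calc ε * (τ-1) = (τ-1) * ε := by ring
    _ ≤ Q * M := hfinal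
    _ = P * Hv * M * μ^(k+1) := by rw [hQdef]; ring
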